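/- If H is Hermitian invertible and B is H-nonnegative, then every eigenvalue of B is real. -/

import Mathlib

open Matrix
open scoped ComplexOrder

theorem H_nonnegative_real_spectrum {n : ℕ}
    (H B : Matrix (Fin n) (Fin n) ℂ)
    (hH : H.IsHermitian) (hHinv : IsUnit H)
    (hB : (H * B).PosSemidef) :
    ∀ z ∈ spectrum ℂ B, z.im = 0 := by
  intro z hz
  -- get an eigenvector
  rw [spectrum.mem_iff] at hz
  have hdet : (z • (1 : Matrix (Fin n) (Fin n) ℂ) - B).det = 0 := by
    by_contra h
    apply hz
    rw [Algebra.algebraMap_eq_smul_one]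
    exact (Matrix.isUnit_iff_isUnit_det _).mpr (isUnit_iff_ne_zero.mpr h)
  obtain ⟨v, hv0, hv⟩ := (Matrix.exists_mulVec_eq_zero_iff).mpr hdet
  have hBv : B *ᵥ v = z • v := by
    have := hv
    rw [sub_mulVec, sub_eq_zero, smul_mulVec, one_mulVec] at this
    exact this.symm
  -- quadratic forms
  set c : ℂ := star v ⬝ᵥ H *ᵥ v with hc
  have hq : star v ⬝ᵥ (H * B) *ᵥ v = z * c := by
    rw [← Matrix.mulVec_mulVec, hBv, Matrix.mulVec_smul, dotProduct_smul, hc, smul_eq_mul]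
  have hpos : 0 ≤ z * c := hq ▸ hB.dotProduct_mulVec_nonneg v
  by_cases hcz : c = 0
  · -- then star v ⬝ᵥ (H*B) v = 0, so (H*B) v = 0, so z • (H v) = 0
    have h0 : (H * B) *ᵥ v = 0 :=
      (hB.dotProduct_mulVec_zero_iff v).mp (by rw [hq, hcz, mul_zero])
    have h1 : H *ᵥ (z • v) = 0 := by
      rw [← hBv, Matrix.mulVec_mulVec]; exact h0
    have h2 : z • v = (0 : Fin n → ℂ) := by
      have hinj := Matrix.mulVec_injective_iff_isUnit.mpr hHinv
      apply hinj
      rw [h1, Matrix.mulVec_zero]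
    rcases smul_eq_zero.mp h2 with h | h
    · simp [h]
    · exact absurd h hv0
  · -- c is real since H is Hermitian
    have hcreal : (starRingEnd ℂ) c = c := by
      rw [starRingEnd_apply, hc, ← Matrix.star_dotProduct, star_mulVec, hH.eq,
        ← Matrix.dotProduct_mulVec]
    have hcim : c.im = 0 := Complex.conj_eq_iff_im.mp hcreal
    have him : (z * c).im = 0 := by
      rw [Complex.nonneg_iff] at hpos
      exact hpos.2.symm
    rw [Complex.mul_im, hcim, mul_zero, zero_add] at him
    have hcre : c.re ≠ 0 := by
      intro h; exact hcz (Complex.ext h hcim)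
    exact (mul_eq_zero.mp him).resolve_right hcre
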